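/- Let K be a Markov kernel on ℝ that maps C₀(ℝ) into C₀(ℝ) and maps bounded non-decreasing functions to bounded non-decreasing functions. Then for all u, v ∈ ℝ and every continuous f : ℝ → ℝ with f(x) → u as x → −∞ and f(x) → v as x → +∞, the function Kf is continuous with Kf(x) → u as x → −∞ and Kf(x) → v as x → +∞. -/

import Mathlib

open MeasureTheory ProbabilityTheory ZeroAtInfty Filter

/-! ### Auxiliary definitions and lemmas -/

/-- A fixed continuous monotone function with limit `0` at `−∞` and `1` at `+∞`. -/
noncomputable def stmtPhi : ℝ → ℝ := fun x => 1 / 2 + Real.arctan x / Real.pi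

lemma stmtPhi_cont : Continuous stmtPhi :=
  continuous_const.add (Real.continuous_arctan.div_const _)

lemma stmtPhi_mono : Monotone stmtPhi := by
  intro a b hab
  have h := Real.arctan_strictMono.monotone hab
  have hpi := Real.pi_pos
  unfold stmtPhi
  gcongr

lemma stmtPhi_abs (x : ℝ) : |Real.arctan x / Real.pi| ≤ 1 / 2 := by
  have h1 := Real.neg_pi_div_two_lt_arctan x
  have h2 := Real.arctan_lt_pi_div_two x
  have hpi := Real.pi_pos
  rw [abs_div, abs_of_pos hpi, div_le_iff₀ hpi, abs_le]
  constructor <;> linarith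

lemma stmtPhi_nonneg (x : ℝ) : 0 ≤ stmtPhi x := by
  have := stmtPhi_abs x
  rw [abs_le] at this
  unfold stmtPhi; linarith [this.1]

lemma stmtPhi_le_one (x : ℝ) : stmtPhi x ≤ 1 := by
  have := stmtPhi_abs x
  rw [abs_le] at this
  unfold stmtPhi; linarith [this.2]

lemma stmtPhi_abs_le_one (x : ℝ) : |stmtPhi x| ≤ 1 :=
  abs_le.mpr ⟨by linarith [stmtPhi_nonneg x], stmtPhi_le_one x⟩

lemma stmtPhi_atTop : Tendsto stmtPhi atTop (nhds 1) := by
  have h : Tendsto Real.arctan atTop (nhds (Real.pi / 2)) :=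
    Real.tendsto_arctan_atTop.mono_right nhdsWithin_le_nhds
  have := (h.div_const Real.pi).const_add (1 / 2 : ℝ)
  have hpi := Real.pi_ne_zero
  convert this using 2
  · rfl
  · rw [div_right_comm, div_self hpi]; norm_num

lemma stmtPhi_atBot : Tendsto stmtPhi atBot (nhds 0) := by
  have h : Tendsto Real.arctan atBot (nhds (-(Real.pi / 2))) :=
    Real.tendsto_arctan_atBot.mono_right nhdsWithin_le_nhds
  have := (h.div_const Real.pi).const_add (1 / 2 : ℝ)
  have hpi := Real.pi_ne_zero
  convert this using 2
  · rfl
  · rw [neg_div, div_right_comm, div_self hpi]; norm_num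

/-- A bounded (a.e. strongly measurable) function is integrable w.r.t. a finite measure. -/
lemma aux_integrable {μ : Measure ℝ} [IsFiniteMeasure μ] {f : ℝ → ℝ}
    (hf : AEStronglyMeasurable f μ) {M : ℝ} (hM : ∀ y, |f y| ≤ M) :
    Integrable f μ :=
  (integrable_const M).mono' hf (Eventually.of_forall fun y => by
    simpa [Real.norm_eq_abs] using hM y)

/-- A continuous function on `ℝ` with limits at `±∞` is bounded. -/
lemma aux_bounded {f : ℝ → ℝ} (hfc : Continuous f) {u v : ℝ}
    (hb : Tendsto f atBot (nhds u)) (ht : Tendsto f atTop (nhds v)) :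
    ∃ M, ∀ x, |f x| ≤ M := by
  have h1 : ∀ᶠ x in atBot, |f x| ≤ |u| + 1 := by
    filter_upwards [hb (Metric.ball_mem_nhds u one_pos)] with x hx
    rw [Set.mem_preimage, Metric.mem_ball, Real.dist_eq] at hx
    calc |f x| = |(f x - u) + u| := by ring_nf
    _ ≤ |f x - u| + |u| := abs_add_le _ _
    _ ≤ |u| + 1 := by linarith [hx.le]
  have h2 : ∀ᶠ x in atTop, |f x| ≤ |v| + 1 := by
    filter_upwards [ht (Metric.ball_mem_nhds v one_pos)] with x hx
    rw [Set.mem_preimage, Metric.mem_ball, Real.dist_eq] at hx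
    calc |f x| = |(f x - v) + v| := by ring_nf
    _ ≤ |f x - v| + |v| := abs_add_le _ _
    _ ≤ |v| + 1 := by linarith [hx.le]
  obtain ⟨a, ha⟩ := eventually_atBot.mp h1
  obtain ⟨b, hbb⟩ := eventually_atTop.mp h2
  obtain ⟨C, hC⟩ := (isCompact_Icc (a := a) (b := b)).exists_bound_of_continuousOn
    hfc.continuousOn
  refine ⟨max C (max (|u| + 1) (|v| + 1)), fun x => ?_⟩
  rcases le_total x a with h | h
  · exact (ha x h).trans (le_max_of_le_right (le_max_left _ _))
  rcases le_total b x with h' | h'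
  · exact (hbb x h').trans (le_max_of_le_right (le_max_right _ _))
  · have := hC x ⟨h, h'⟩
    rw [Real.norm_eq_abs] at this
    exact this.trans (le_max_left _ _)

/-- The `C₀` hypothesis, restated with `atBot`/`atTop`. -/
lemma aux_C0 (κ : Kernel ℝ ℝ) [IsMarkovKernel κ]
    (hC0 : ∀ f : C₀(ℝ, ℝ), Continuous (fun x => ∫ y, f y ∂(κ x)) ∧
      Tendsto (fun x => ∫ y, f y ∂(κ x)) (cocompact ℝ) (nhds 0))
    {f : ℝ → ℝ} (hfc : Continuous f) (hb : Tendsto f atBot (nhds 0))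
    (ht : Tendsto f atTop (nhds 0)) :
    Continuous (fun x => ∫ y, f y ∂(κ x)) ∧
      Tendsto (fun x => ∫ y, f y ∂(κ x)) atBot (nhds 0) ∧
      Tendsto (fun x => ∫ y, f y ∂(κ x)) atTop (nhds 0) := by
  have hF : Tendsto f (cocompact ℝ) (nhds 0) := by
    rw [cocompact_eq_atBot_atTop]
    exact tendsto_sup.mpr ⟨hb, ht⟩
  obtain ⟨h1, h2⟩ := hC0 ⟨⟨f, hfc⟩, hF⟩
  rw [cocompact_eq_atBot_atTop, tendsto_sup] at h2
  exact ⟨h1, h2.1, h2.2⟩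

/-- Let `K` be a Markov kernel on `ℝ` that maps `C₀(ℝ)` into `C₀(ℝ)` and maps bounded
non-decreasing Borel functions to non-decreasing functions. Then `K` maps `C_{u,v}(ℝ)`
into `C_{u,v}(ℝ)`: if `f` is continuous with limits `u` at `−∞` and `v` at `+∞`,
so is `Kf`. -/
theorem stmt11 (κ : Kernel ℝ ℝ) [IsMarkovKernel κ]
    (hC0 : ∀ f : C₀(ℝ, ℝ), Continuous (fun x => ∫ y, f y ∂(κ x)) ∧
      Tendsto (fun x => ∫ y, f y ∂(κ x)) (cocompact ℝ) (nhds 0))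
    (hmono : ∀ f : ℝ → ℝ, Measurable f → Monotone f → (∃ M, ∀ x, |f x| ≤ M) →
      Monotone (fun x => ∫ y, f y ∂(κ x))) :
    ∀ (u v : ℝ) (f : ℝ → ℝ), Continuous f →
      Tendsto f atBot (nhds u) → Tendsto f atTop (nhds v) →
      Continuous (fun x => ∫ y, f y ∂(κ x)) ∧
      Tendsto (fun x => ∫ y, f y ∂(κ x)) atBot (nhds u) ∧
      Tendsto (fun x => ∫ y, f y ∂(κ x)) atTop (nhds v) := by
  intro u v f hfc hfb hft
  -- the functions Φ = K(stmtPhi) and Ψ t = K(stmtPhi (· - t))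
  set Φ : ℝ → ℝ := fun x => ∫ y, stmtPhi y ∂(κ x) with hΦdef
  set Ψ : ℝ → ℝ → ℝ := fun t x => ∫ y, stmtPhi (y - t) ∂(κ x) with hΨdef
  have hint0 : ∀ x, Integrable stmtPhi (κ x) := fun x =>
    aux_integrable stmtPhi_cont.aestronglyMeasurable stmtPhi_abs_le_one
  have hint : ∀ t x, Integrable (fun y => stmtPhi (y - t)) (κ x) := fun t x =>
    aux_integrable ((stmtPhi_cont.comp (continuous_id.sub continuous_const)).aestronglyMeasurable)
      (fun y => stmtPhi_abs_le_one (y - t))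
  have hΦmono : Monotone Φ :=
    hmono _ stmtPhi_cont.measurable stmtPhi_mono ⟨1, stmtPhi_abs_le_one⟩
  have hΨmono : ∀ t, Monotone (Ψ t) := fun t =>
    hmono _ (stmtPhi_cont.measurable.comp (measurable_id.sub measurable_const))
      (fun a b hab => stmtPhi_mono (sub_le_sub_right hab t))
      ⟨1, fun y => stmtPhi_abs_le_one (y - t)⟩
  have hΨ0 : ∀ t x, 0 ≤ Ψ t x := fun t x =>
    integral_nonneg fun y => stmtPhi_nonneg (y - t)
  have hΨ1 : ∀ t x, Ψ t x ≤ 1 := by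
    intro t x
    calc Ψ t x ≤ ∫ _, (1 : ℝ) ∂(κ x) :=
          integral_mono (hint t x) (integrable_const 1) fun y => stmtPhi_le_one (y - t)
    _ = 1 := by simp
  have hΦ0 : ∀ x, 0 ≤ Φ x := fun x => integral_nonneg fun y => stmtPhi_nonneg y
  have hΦ1 : ∀ x, Φ x ≤ 1 := by
    intro x
    calc Φ x ≤ ∫ _, (1 : ℝ) ∂(κ x) :=
          integral_mono (hint0 x) (integrable_const 1) fun y => stmtPhi_le_one y
    _ = 1 := by simp
  -- the difference Φ - Ψ t belongs to the image of C₀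
  have hd : ∀ t, Continuous (fun x => Φ x - Ψ t x) ∧
      Tendsto (fun x => Φ x - Ψ t x) atBot (nhds 0) ∧
      Tendsto (fun x => Φ x - Ψ t x) atTop (nhds 0) := by
    intro t
    have hψc : Continuous (fun y => stmtPhi y - stmtPhi (y - t)) :=
      stmtPhi_cont.sub (stmtPhi_cont.comp (continuous_id.sub continuous_const))
    have hsubBot : Tendsto (fun y : ℝ => y - t) atBot atBot := by
      simpa [sub_eq_add_neg] using tendsto_atBot_add_const_right atBot (-t) tendsto_id
    have hsubTop : Tendsto (fun y : ℝ => y - t) atTop atTop := by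
      simpa [sub_eq_add_neg] using tendsto_atTop_add_const_right atTop (-t) tendsto_id
    have hψb : Tendsto (fun y => stmtPhi y - stmtPhi (y - t)) atBot (nhds 0) := by
      simpa using stmtPhi_atBot.sub (stmtPhi_atBot.comp hsubBot)
    have hψt : Tendsto (fun y => stmtPhi y - stmtPhi (y - t)) atTop (nhds 0) := by
      simpa using stmtPhi_atTop.sub (stmtPhi_atTop.comp hsubTop)
    have h := aux_C0 κ hC0 hψc hψb hψt
    have key : (fun x => ∫ y, (stmtPhi y - stmtPhi (y - t)) ∂(κ x)) =
        fun x => Φ x - Ψ t x :=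
      funext fun x => integral_sub (hint0 x) (hint t x)
    rw [key] at h
    exact h
  -- pointwise limits in `t`
  have hup : ∀ x, Tendsto (fun t => Ψ t x) atBot (nhds 1) := by
    intro x
    have h1 : Tendsto (fun t => Ψ t x) atBot (nhds (∫ _, (1 : ℝ) ∂(κ x))) := by
      apply tendsto_integral_filter_of_dominated_convergence (fun _ => (1 : ℝ))
      · exact Eventually.of_forall fun t => (hint t x).aestronglyMeasurable
      · exact Eventually.of_forall fun t => Eventually.of_forall fun y => by
          simpa [Real.norm_eq_abs] using stmtPhi_abs_le_one (y - t)
      · exact integrable_const 1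
      · refine Eventually.of_forall fun y => ?_
        have hy : Tendsto (fun t : ℝ => y - t) atBot atTop := by
          simpa [sub_eq_add_neg] using
            tendsto_atTop_add_const_left atBot y tendsto_neg_atBot_atTop
        exact stmtPhi_atTop.comp hy
    simpa using h1
  have hdown : ∀ x, Tendsto (fun t => Ψ t x) atTop (nhds 0) := by
    intro x
    have h1 : Tendsto (fun t => Ψ t x) atTop (nhds (∫ _, (0 : ℝ) ∂(κ x))) := by
      apply tendsto_integral_filter_of_dominated_convergence (fun _ => (1 : ℝ))
      · exact Eventually.of_forall fun t => (hint t x).aestronglyMeasurable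
      · exact Eventually.of_forall fun t => Eventually.of_forall fun y => by
          simpa [Real.norm_eq_abs] using stmtPhi_abs_le_one (y - t)
      · exact integrable_const 1
      · refine Eventually.of_forall fun y => ?_
        have hy : Tendsto (fun t : ℝ => y - t) atTop atBot := by
          simpa [sub_eq_add_neg] using
            tendsto_atBot_add_const_left atTop y tendsto_neg_atTop_atBot
        exact stmtPhi_atBot.comp hy
    simpa using h1
  -- limits of Φ at ±∞
  have hΦtop : Tendsto Φ atTop (nhds 1) := by
    rw [Metric.tendsto_nhds]
    intro ε hε
    obtain ⟨t, htq⟩ :=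
      ((hup 0).eventually (eventually_gt_nhds (show (1 : ℝ) - ε / 2 < 1 by linarith))).exists
    have hd3 := (hd t).2.2
    rw [Metric.tendsto_nhds] at hd3
    filter_upwards [hd3 (ε / 2) (by linarith), eventually_ge_atTop (0 : ℝ)] with x hx hx0
    rw [Real.dist_eq] at hx ⊢
    have h1 : Ψ t 0 ≤ Ψ t x := hΨmono t hx0
    have h2 := hΦ1 x
    have h3 := abs_lt.mp (by simpa using hx)
    rw [abs_lt]
    constructor <;> linarith [h3.1, h3.2]
  have hΦbot : Tendsto Φ atBot (nhds 0) := by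
    rw [Metric.tendsto_nhds]
    intro ε hε
    obtain ⟨t, htq⟩ :=
      ((hdown 0).eventually (eventually_lt_nhds (show (0 : ℝ) < ε / 2 by linarith))).exists
    have hd3 := (hd t).2.1
    rw [Metric.tendsto_nhds] at hd3
    filter_upwards [hd3 (ε / 2) (by linarith), eventually_le_atBot (0 : ℝ)] with x hx hx0
    rw [Real.dist_eq] at hx ⊢
    have h1 : Ψ t x ≤ Ψ t 0 := hΨmono t hx0
    have h2 := hΨ0 t x
    have h2' := hΦ0 x
    have h3 := abs_lt.mp (by simpa using hx)
    rw [abs_lt]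
    constructor <;> linarith [h3.1, h3.2]
  -- continuity of Φ
  have hΦcont : Continuous Φ := by
    rw [continuous_iff_continuousAt]
    intro x₀
    rw [Metric.continuousAt_iff]
    intro ε hε
    obtain ⟨t₁, ht₁⟩ :=
      ((hup x₀).eventually (eventually_gt_nhds (show (1 : ℝ) - ε / 2 < 1 by linarith))).exists
    obtain ⟨t₂, ht₂⟩ :=
      ((hdown x₀).eventually (eventually_lt_nhds (show (0 : ℝ) < ε / 2 by linarith))).exists
    have hc₁ := ((hd t₁).1.continuousAt (x := x₀))
    have hc₂ := ((hd t₂).1.continuousAt (x := x₀))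
    rw [Metric.continuousAt_iff] at hc₁ hc₂
    obtain ⟨δ₁, hδ₁, H₁⟩ := hc₁ (ε / 2) (by linarith)
    obtain ⟨δ₂, hδ₂, H₂⟩ := hc₂ (ε / 2) (by linarith)
    refine ⟨min δ₁ δ₂, lt_min hδ₁ hδ₂, fun {x} hx => ?_⟩
    have hx₁ := H₁ (lt_of_lt_of_le hx (min_le_left _ _))
    have hx₂ := H₂ (lt_of_lt_of_le hx (min_le_right _ _))
    rw [Real.dist_eq] at hx₁ hx₂ ⊢
    have h1 := abs_lt.mp hx₁
    have h2 := abs_lt.mp hx₂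
    rcases le_total x x₀ with h | h
    · have m1 : Φ x ≤ Φ x₀ := hΦmono h
      have m2 : Ψ t₂ x ≤ Ψ t₂ x₀ := hΨmono t₂ h
      have m3 := hΨ0 t₂ x
      rw [abs_lt]
      constructor <;> linarith [h2.1, h2.2]
    · have m1 : Φ x₀ ≤ Φ x := hΦmono h
      have m2 : Ψ t₁ x₀ ≤ Ψ t₁ x := hΨmono t₁ h
      have m3 := hΨ1 t₁ x
      rw [abs_lt]
      constructor <;> linarith [h1.1, h1.2]
  -- decompose f as g + u + (v - u) * stmtPhi with g ∈ C₀
  set g : ℝ → ℝ := fun x => f x - u - (v - u) * stmtPhi x with hgdef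
  have hgc : Continuous g := (hfc.sub continuous_const).sub (continuous_const.mul stmtPhi_cont)
  have hgb : Tendsto g atBot (nhds 0) := by
    have := (hfb.sub (tendsto_const_nhds (x := u))).sub
      ((tendsto_const_nhds (x := v - u)).mul stmtPhi_atBot)
    simpa using this
  have hgt : Tendsto g atTop (nhds 0) := by
    have := (hft.sub (tendsto_const_nhds (x := u))).sub
      ((tendsto_const_nhds (x := v - u)).mul stmtPhi_atTop)
    simpa using this
  obtain ⟨hGc, hGb, hGt⟩ := aux_C0 κ hC0 hgc hgb hgt
  obtain ⟨M, hM⟩ := aux_bounded hfc hfb hft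
  have hfint : ∀ x, Integrable f (κ x) := fun x =>
    aux_integrable hfc.aestronglyMeasurable hM
  have hgint : ∀ x, Integrable g (κ x) := fun x =>
    ((hfint x).sub (integrable_const u)).sub ((hint0 x).const_mul _)
  have key : (fun x => ∫ y, f y ∂(κ x)) =
      fun x => (∫ y, g y ∂(κ x)) + u + (v - u) * Φ x := by
    funext x
    have h1 : ∫ y, g y ∂(κ x) = (∫ y, f y ∂(κ x)) - u - (v - u) * Φ x := by
      have e1 : ∫ y, g y ∂(κ x) =
          (∫ y, (f y - u) ∂(κ x)) - ∫ y, (v - u) * stmtPhi y ∂(κ x) :=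
        integral_sub ((hfint x).sub (integrable_const u)) ((hint0 x).const_mul _)
      have e2 : ∫ y, (f y - u) ∂(κ x) = (∫ y, f y ∂(κ x)) - ∫ _, (u : ℝ) ∂(κ x) :=
        integral_sub (hfint x) (integrable_const u)
      have e3 : ∫ y, (v - u) * stmtPhi y ∂(κ x) = (v - u) * Φ x :=
        integral_const_mul _ _
      rw [e1, e2, e3, integral_const]
      simp
    rw [h1]; ring
  rw [key]
  refine ⟨(hGc.add continuous_const).add (continuous_const.mul hΦcont), ?_, ?_⟩
  · have := (hGb.add (tendsto_const_nhds (x := u))).add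
      ((tendsto_const_nhds (x := v - u)).mul hΦbot)
    simpa using this
  · have := (hGt.add (tendsto_const_nhds (x := u))).add
      ((tendsto_const_nhds (x := v - u)).mul hΦtop)
    convert this using 2
    ring
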